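/- The diagonal matrix G = [[2I, 0], [0, (1/2)I]] ∈ ℝ^{2d×2d} (which is symplectic, symmetric, and positive definite) cannot be written as a product [[I,S₃],[0,I]] · [[I,0],[S₂,I]] · [[I,S₁],[0,I]] for any symmetric matrices S₁, S₂, S₃ ∈ ℝ^{d×d}. -/
import Mathlib

open Matrix

def Jmat (d : ℕ) : Matrix (Fin d ⊕ Fin d) (Fin d ⊕ Fin d) ℝ :=
  Matrix.fromBlocks 0 1 (-1) 0

def IsSymplectic {d : ℕ} (H : Matrix (Fin d ⊕ Fin d) (Fin d ⊕ Fin d) ℝ) : Prop :=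
  Hᵀ * Jmat d * H = Jmat d

theorem stmt19 (d : ℕ) (hd : 1 ≤ d) :
    ¬ ∃ S₁ S₂ S₃ : Matrix (Fin d) (Fin d) ℝ,
      S₁ᵀ = S₁ ∧ S₂ᵀ = S₂ ∧ S₃ᵀ = S₃ ∧
      Matrix.fromBlocks 1 S₃ 0 1 * Matrix.fromBlocks 1 0 S₂ 1 *
          Matrix.fromBlocks 1 S₁ 0 1 =
        Matrix.fromBlocks ((2 : ℝ) • 1) 0 0 (((1 : ℝ)/2) • 1) := by
  rintro ⟨S₁, S₂, S₃, -, -, -, h⟩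
  rw [Matrix.fromBlocks_multiply, Matrix.fromBlocks_multiply] at h
  simp only [Matrix.mul_one, Matrix.one_mul, Matrix.mul_zero, Matrix.zero_mul,
    add_zero, zero_add] at h
  rw [Matrix.fromBlocks_inj] at h
  obtain ⟨-, -, h21, h22⟩ := h
  have hS₂ : S₂ = 0 := by simpa using h21
  rw [hS₂] at h22
  simp only [Matrix.zero_mul, zero_add] at h22
  obtain ⟨i⟩ : Nonempty (Fin d) := ⟨⟨0, hd⟩⟩
  have := congrFun (congrFun h22 i) i
  simp [Matrix.one_apply] at this
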